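/- A kernel is s-finite if and only if it is the pushforward (composition with a deterministic kernel of a measurable function) of a σ-finite kernel. Concretely: if ν : X ⇝ Y is s-finite, then there is a σ-finite kernel μ : X ⇝ ℕ × Y with ν = snd_* μ; conversely any pushforward of a σ-finite kernel along a measurable function is s-finite. -/

import Mathlib

open MeasureTheory ProbabilityTheory

/-- A kernel `k : X ⇝ Y` is σ-finite if it is a countable sum of finite kernels `kₙ` that are
pairwise mutually singular: there is a measurable partition `{Aₙ}` of `X × Y` with each `kₙ x`
supported in the slice `Aₙˣ`. -/
def IsSigmaFiniteKernel {X Y : Type*} [MeasurableSpace X] [MeasurableSpace Y]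
    (k : Kernel X Y) : Prop :=
  ∃ (ks : ℕ → Kernel X Y) (A : ℕ → Set (X × Y)),
    (∀ n, IsFiniteKernel (ks n)) ∧
    (∀ n, MeasurableSet (A n)) ∧
    Pairwise (Function.onFun Disjoint A) ∧
    (⋃ n, A n) = Set.univ ∧
    (∀ n x, ks n x {y | (x, y) ∉ A n} = 0) ∧
    k = Kernel.sum ks

/-- A kernel is s-finite iff it is the pushforward of a σ-finite kernel: every s-finite
`ν : X ⇝ Y` is `snd_* μ` for some σ-finite `μ : X ⇝ ℕ × Y`, and conversely every pushforward of
a σ-finite kernel along a measurable function is s-finite. -/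
theorem sfinite_iff_pushforward_sigmaFinite {X Y : Type*} [MeasurableSpace X] [MeasurableSpace Y] :
    (∀ ν : Kernel X Y, IsSFiniteKernel ν →
      ∃ μ : Kernel X (ℕ × Y), IsSigmaFiniteKernel μ ∧ ν = μ.map Prod.snd) ∧
    (∀ (Z W : Type) (_ : MeasurableSpace Z) (_ : MeasurableSpace W)
      (μ : Kernel X Z) (f : Z → W), Measurable f → IsSigmaFiniteKernel μ →
        IsSFiniteKernel (μ.map f)) := by
  constructor
  · intro ν hν
    set ks : ℕ → Kernel X (ℕ × Y) :=
      fun n => (ν.seq n).map (fun y => (n, y)) with hks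
    have hmeas : ∀ n : ℕ, Measurable (fun y : Y => ((n : ℕ), y)) :=
      fun n => measurable_const.prodMk measurable_id
    refine ⟨Kernel.sum ks, ⟨ks, fun n => {p : X × ℕ × Y | p.2.1 = n}, ?_, ?_, ?_, ?_, ?_, rfl⟩, ?_⟩
    · intro n; infer_instance
    · intro n
      exact (measurable_fst.comp measurable_snd) (MeasurableSet.singleton n)
    · intro m n hmn
      simp only [Function.onFun, Set.disjoint_left]
      rintro ⟨x, k, y⟩ hm hn
      exact hmn (hm.symm.trans hn)
    · ext ⟨x, k, y⟩
      simp
    · intro n x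
      rw [hks, Kernel.map_apply _ (hmeas n),
        Measure.map_apply (hmeas n) (by
          have : {p : ℕ × Y | (x, p) ∉ {p : X × ℕ × Y | p.2.1 = n}} = (Prod.fst ⁻¹' {n})ᶜ := by
            ext p; simp
          rw [this]
          exact (measurable_fst (MeasurableSet.singleton n)).compl)]
      convert measure_empty (μ := ν.seq n x)
      ext y; simp
    · ext x s hs
      rw [Kernel.map_apply' _ measurable_snd _ hs, Kernel.sum_apply',
        ← Kernel.measure_sum_seq ν x, Measure.sum_apply _ hs]
      · congr 1
        ext n
        rw [hks, Kernel.map_apply' _ (hmeas n) _ (measurable_snd hs)]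
        congr 1
      · exact measurable_snd hs
  · rintro Z W _ _ μ f hf ⟨ks, A, hfin, _, _, _, _, hsum⟩
    have : IsSFiniteKernel μ := by
      rw [hsum]
      exact Kernel.isSFiniteKernel_sum (hκs := fun n => have := hfin n; inferInstance)
    infer_instance
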